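/- arXiv:1106.4595 — 3 statements merged into one kernel-verified Lean document; each statement's English description precedes it below -/
import Mathlib

section
/- Let G₁ and G₂ be nontrivial groups that are not both cyclic of order 2 (i.e., it is not the case that both G₁ and G₂ have exactly two elements). Then the free product G₁ * G₂ is normally insoluble: every solvable normal subgroup of G₁ * G₂ is trivial. -/
open Monoid CoprodI

namespace FPAux



theorem exists_ne_ne {α : Type*} [Nontrivial α] (h : Nat.card α ≠ 2) (x y : α) :
    ∃ z, z ≠ x ∧ z ≠ y := by
  by_contra hc
  push_neg at hc
  have hc' : ∀ z : α, z = x ∨ z = y := fun z => by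
    by_cases h' : z = x
    · exact Or.inl h'
    · exact Or.inr (hc z h')
  by_cases hxy : x = y
  · subst hxy
    obtain ⟨a, b, hab⟩ := exists_pair_ne α
    rcases hc' a with h1|h1 <;> rcases hc' b with h2|h2 <;> exact hab (h1.trans h2.symm) |>.elim
  · exact h (Nat.card_eq_two_iff.mpr ⟨x, y, hxy, Set.eq_univ_of_forall fun z => by
      rcases hc' z with h1|h1 <;> simp [h1]⟩)

variable {ι : Type*} {G : ι → Type*} [∀ i, Group (G i)]

theorem replaceHead_toList_length {i j : ι} (x : G i) (h : x ≠ 1) (w : NeWord G i j) :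
    (w.replaceHead x h).toList.length = w.toList.length := by
  induction w with
  | singleton => rfl
  | append w₁ hne w₂ ih₁ ih₂ => simp [NeWord.replaceHead, ih₁]

theorem mulHead_toList_length {i j : ι} (w : NeWord G i j) (x : G i) (h : x * w.head ≠ 1) :
    (w.mulHead x h).toList.length = w.toList.length :=
  replaceHead_toList_length _ _ _

theorem prod_inj {i j k l : ι} {w₁ : NeWord G i j} {w₂ : NeWord G k l}
    (h : w₁.prod = w₂.prod) : w₁.toList = w₂.toList := by
  classical
  have h' : Word.equiv.symm w₁.toWord = Word.equiv.symm w₂.toWord := h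
  have := Word.equiv.symm.injective h'
  exact congrArg Word.toList this

section OneSided
variable (A : Subgroup (CoprodI G)) (hN : A.Normal)
    (hab : ∀ x ∈ A, ∀ y ∈ A, x * y = y * x)

include hN hab in
/-- A nontrivial element of a factor cannot lie in an abelian normal subgroup,
provided there is another nontrivial factor. -/
theorem fact1 {i j : ι} (hij : i ≠ j) [Nontrivial (G j)] {c : G i} (hc : c ≠ 1)
    (hmem : of c ∈ A) : False := by
  obtain ⟨b, hb⟩ := exists_ne (1 : G j)
  have hb' : b⁻¹ ≠ 1 := inv_ne_one.mpr hb
  have hmem' : of b * of c * (of b)⁻¹ ∈ A := by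
    simpa [mul_assoc] using hN.conj_mem _ hmem (of b)
  have hcomm := hab _ hmem _ hmem'
  have hji : j ≠ i := hij.symm
  set P₁ : NeWord G i j :=
    .append (.append (.append (.singleton c hc) hij (.singleton b hb)) hji
      (.singleton c hc)) hij (.singleton b⁻¹ hb') with hP₁
  set P₂ : NeWord G j i :=
    .append (.append (.append (.singleton b hb) hji (.singleton c hc)) hij
      (.singleton b⁻¹ hb')) hji (.singleton c hc) with hP₂
  have h1 : P₁.prod = P₂.prod := by
    simp only [hP₁, hP₂, NeWord.append_prod, NeWord.prod_singleton]
    rw [map_inv]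
    rw [mul_assoc, mul_assoc] at hcomm ⊢
    rw [hcomm]
    group
  have := prod_inj h1
  simp only [hP₁, hP₂, NeWord.toList, List.cons_append, List.nil_append] at this
  have : (⟨i, c⟩ : Σ k, G k) = ⟨j, b⟩ := by
    injection this
  exact hij (congrArg Sigma.fst this)

include hN hab in
/-- A mixed word (head index ≠ last index) cannot lie in an abelian normal subgroup,
when the head factor has ≥ 3 elements. -/
theorem fact2_onesided {i j : ι} (hij : i ≠ j) [Nontrivial (G j)] (hbig : Nat.card (G i) ≠ 2)
    [Nontrivial (G i)] (w : NeWord G i j) (hmem : w.prod ∈ A) : False := by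
  have hji : j ≠ i := hij.symm
  obtain ⟨u, hu⟩ := exists_ne (1 : G j)
  obtain ⟨s, hsa, hs1⟩ := exists_ne_ne hbig w.head 1
  obtain ⟨v, hva, hv1⟩ := exists_ne_ne hbig w.head⁻¹ 1
  have hva' : v * w.head ≠ 1 := fun h => hva (eq_inv_of_mul_eq_one_left h)
  have hsa' : s⁻¹ * w.head ≠ 1 := fun h => hsa (inv_mul_eq_one.mp h)
  have hu' : u⁻¹ ≠ 1 := inv_ne_one.mpr hu
  have hv' : v⁻¹ ≠ 1 := inv_ne_one.mpr hv1
  have hs' : s⁻¹ ≠ 1 := inv_ne_one.mpr hs1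
  -- y₁ = g w.prod g⁻¹ with g = of s * of u * of v
  set g : CoprodI G := of s * of u * of v with hg
  have hmem₁ : g * w.prod * g⁻¹ ∈ A := hN.conj_mem _ hmem g
  have hcomm := hab _ hmem _ hmem₁
  set wv : NeWord G i j := w.mulHead v hva' with hwv
  set W₁ : NeWord G i i :=
    .append (.singleton s hs1) hij (.append (.singleton u hu) hji
      (.append wv hji (.append (.singleton v⁻¹ hv') hij
        (.append (.singleton u⁻¹ hu') hji (.singleton s⁻¹ hs'))))) with hW₁
  set W₁' : NeWord G i j :=
    .append (.singleton s hs1) hij (.append (.singleton u hu) hji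
      (.append wv hji (.append (.singleton v⁻¹ hv') hij
        (.singleton u⁻¹ hu')))) with hW₁'
  set Z₁ : NeWord G i i := .append w hji W₁ with hZ₁
  set Z₂ : NeWord G i j := .append W₁' hji (w.mulHead s⁻¹ hsa') with hZ₂
  have hprod₁ : Z₁.prod = w.prod * (g * w.prod * g⁻¹) := by
    simp only [hZ₁, hW₁, hwv, NeWord.append_prod, NeWord.prod_singleton, NeWord.mulHead_prod,
      hg, map_inv]
    group
  have hprod₂ : Z₂.prod = (g * w.prod * g⁻¹) * w.prod := by
    simp only [hZ₂, hW₁', hwv, NeWord.append_prod, NeWord.prod_singleton, NeWord.mulHead_prod,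
      hg, map_inv]
    group
  have heq : Z₁.prod = Z₂.prod := by rw [hprod₁, hprod₂, hcomm]
  have hlist := prod_inj heq
  have hlen := congrArg List.length hlist
  simp only [hZ₁, hZ₂, hW₁, hW₁', hwv, NeWord.toList, List.length_append,
    List.length_singleton, mulHead_toList_length] at hlen
  omega




end OneSided

theorem inv_toList_length {i j : ι} (w : NeWord G i j) :
    w.inv.toList.length = w.toList.length := by
  induction w with
  | singleton => rfl
  | append w₁ hne w₂ ih₁ ih₂ => simp [NeWord.inv, ih₁, ih₂]; omega

theorem prod_ne_one {i j : ι} (w : NeWord G i j) : w.prod ≠ 1 := by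
  classical
  intro h
  have h' : Word.equiv.symm w.toWord = Word.equiv.symm Word.empty := by
    simpa [Word.equiv] using (show w.toWord.prod = 1 from h)
  have := congrArg Word.toList (Word.equiv.symm.injective h')
  exact w.toList_ne_nil (by have h2 : w.toWord.toList = [] := (by simpa [Word.empty] using this); exact h2)

theorem eq_of_length_one {i j : ι} (w : NeWord G i j) (h : w.toList.length = 1) : i = j := by
  obtain ⟨a, ha⟩ := List.length_eq_one_iff.mp h
  have h1 := w.toList_head?
  have h2 := w.toList_getLast?
  rw [ha] at h1 h2
  simp only [List.head?, List.getLast?_singleton, Option.some.injEq] at h1 h2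
  rw [h1] at h2
  exact (Sigma.mk.inj_iff.mp h2).1

/-- head decomposition of a nonempty word -/
theorem tail_decomp {i j : ι} (w : NeWord G i j) :
    (w.toList.length = 1 ∧ w.prod = of w.head) ∨
      ∃ (k : ι) (_ : i ≠ k) (w' : NeWord G k j),
        w.prod = of w.head * w'.prod ∧ w'.toList.length + 1 = w.toList.length := by
  induction w with
  | singleton x h => exact Or.inl ⟨rfl, by simp⟩
  | @append i j₁ k₂ j w₁ hne w₂ ih₁ ih₂ =>
    rcases ih₁ with ⟨hlen, hprod⟩ | ⟨k, hik, w', hprod, hlen⟩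
    · have hii : i = j₁ := eq_of_length_one w₁ hlen
      refine Or.inr ⟨k₂, hii ▸ hne, w₂, ?_, ?_⟩
      · simp [NeWord.append_prod, hprod]
      · simp [hlen]; omega
    · refine Or.inr ⟨k, hik, w'.append hne w₂, ?_, ?_⟩
      · simp [NeWord.append_prod, hprod, mul_assoc]
      · simp at hlen ⊢; omega


section BoolCase

variable {G : Bool → Type*} [∀ i, Group (G i)] [∀ i, Nontrivial (G i)]

variable (A : Subgroup (CoprodI G)) (hN : A.Normal)
    (hab : ∀ x ∈ A, ∀ y ∈ A, x * y = y * x) (hbig : ∃ b, Nat.card (G b) ≠ 2)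


include hN hab hbig in
theorem fact2 {i j : Bool} (hij : i ≠ j) (w : NeWord G i j) (hmem : w.prod ∈ A) : False := by
  obtain ⟨b, hb⟩ := hbig
  have hb' : b = i ∨ b = j := by
    cases b <;> cases i <;> cases j <;> simp_all
  rcases hb' with rfl | rfl
  · exact fact2_onesided A hN hab hij hb w hmem
  · exact fact2_onesided A hN hab hij.symm hb w.inv (by
      rw [NeWord.inv_prod]; exact A.inv_mem hmem)

include hN hab hbig in
theorem main_ind : ∀ (n : ℕ) {i j : Bool} (w : NeWord G i j),
    w.toList.length ≤ n → w.prod ∉ A := by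
  intro n
  induction n with
  | zero =>
    intro i j w hlen _
    have := w.toList_ne_nil
    simp [List.length_eq_zero_iff.mp (Nat.le_zero.mp hlen)] at this
  | succ n ih =>
    intro i j w hlen hmem
    by_cases hij : i = j
    · subst hij
      rcases tail_decomp w with ⟨hl1, hprod⟩ | ⟨k, hik, w', hprod, hlen'⟩
      · -- w is a single letter
        have hhead : w.head ≠ 1 := by
          have hmem' : (⟨i, w.head⟩ : Σ b, G b) ∈ w.toList := by
            have := w.toList_head?
            exact List.mem_of_mem_head? (by rw [this]; rfl)
          exact w.toWord.ne_one _ hmem'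
        exact fact1 A hN hab (i := i) (j := !i) (by cases i <;> simp) hhead (hprod ▸ hmem)
      · -- w = of h * w'.prod, w' : k → i, i ≠ k
        set h := w.head with hh
        have hz : w'.prod * of h ∈ A := by
          have := hN.conj_mem _ hmem (of h)⁻¹
          rw [hprod] at this
          simpa [mul_assoc] using this
        by_cases hlast : w'.last * h = 1
        · -- cancellation
          rcases tail_decomp w'.inv with ⟨hl1, hprodi⟩ | ⟨k₂, hik₂, v, hprodi, hlen''⟩
          · -- w' is single letter: z = 1, but z conj of w.prod ≠ 1
            have hw' : w'.prod = of w'.last := by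
              have : w'.inv.prod = of (w'.last⁻¹) := by
                rw [hprodi]; congr 1; exact w'.inv_head
              rw [NeWord.inv_prod] at this
              rw [← inv_inv w'.prod, this, ← map_inv, inv_inv]
            have h1 : w'.prod * of h = 1 := by
              rw [hw', ← map_mul, hlast, map_one]
            have h2 : w'.prod = (of h)⁻¹ := by
              rw [eq_inv_iff_mul_eq_one]; exact h1
            exact prod_ne_one w (by rw [hprod, h2, mul_inv_cancel])
          · -- w'.inv = of (w'.last⁻¹) * v.prod, with v : k₂ → k, i ≠ k₂
            have hw' : w'.prod = v.inv.prod * of w'.last := by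
              have h1 : w'.inv.prod = of (w'.last⁻¹) * v.prod := by
                rw [hprodi]; congr 2; exact w'.inv_head
              have h2 : w'.prod⁻¹ = of (w'.last⁻¹) * v.prod := by
                rw [← NeWord.inv_prod]; exact h1
              rw [← inv_inv w'.prod, h2]
              simp [mul_inv_rev, NeWord.inv_prod, map_inv]
            have hzv : v.inv.prod ∈ A := by
              have : w'.prod * of h = v.inv.prod := by
                rw [hw', mul_assoc, ← map_mul, hlast, map_one, mul_one]
              rwa [this] at hz
            refine ih v.inv ?_ hzv
            have l1 : v.inv.toList.length = v.toList.length := inv_toList_length v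
            have l2 : w'.inv.toList.length = w'.toList.length := inv_toList_length w'
            omega
        · -- no cancellation: z is a NeWord of length w' length
          have hcond : h⁻¹ * w'.inv.head ≠ 1 := by
            rw [w'.inv_head]
            intro hcc
            apply hlast
            have : h⁻¹ = w'.last := by
              rwa [mul_inv_eq_one] at hcc
            rw [← this]; simp
          set w'' := (w'.inv.mulHead h⁻¹ hcond).inv with hw''
          have hw''prod : w''.prod = w'.prod * of h := by
            rw [hw'', NeWord.inv_prod, NeWord.mulHead_prod, NeWord.inv_prod]
            simp [map_inv, mul_inv_rev]
          refine ih w'' ?_ (hw''prod ▸ hz)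
          have l1 : w''.toList.length = (w'.inv.mulHead h⁻¹ hcond).toList.length :=
            inv_toList_length _
          have l2 : (w'.inv.mulHead h⁻¹ hcond).toList.length = w'.inv.toList.length :=
            mulHead_toList_length _ _ _
          have l3 : w'.inv.toList.length = w'.toList.length := inv_toList_length w'
          omega
    · exact fact2 A hN hab hbig hij w hmem

include hN hab hbig in
theorem abelian_normal_eq_bot : A = ⊥ := by
  classical
  rw [Subgroup.eq_bot_iff_forall]
  intro x hx
  by_contra hx1
  have hweq : Word.prod (Word.equiv x) = x := Word.equiv.symm_apply_apply x
  have hne : Word.equiv x ≠ Word.empty := by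
    intro h
    rw [h] at hweq
    exact hx1 (hweq.symm.trans (Word.prod_empty))
  obtain ⟨i, j, w, hw⟩ := NeWord.of_word (Word.equiv x) hne
  have : w.prod = x := by rw [NeWord.prod, hw, hweq]
  exact main_ind A hN hab hbig w.toList.length w le_rfl (this ▸ hx)


end BoolCase


open scoped commutatorElement in
theorem solvable_reduction {G : Type*} [Group G]
    (P : ∀ A : Subgroup G, A.Normal → (∀ x ∈ A, ∀ y ∈ A, x * y = y * x) → A = ⊥)
    (H : Subgroup G) (hH : H.Normal) (hsolv : IsSolvable ↥H) : H = ⊥ := by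
  obtain ⟨n, hn⟩ := isSolvable_def _ |>.mp hsolv
  set K : ℕ → Subgroup G := fun m => (derivedSeries ↥H m).map H.subtype with hK
  have hK0 : K 0 = H := by
    simp only [hK, derivedSeries_zero]
    rw [← MonoidHom.range_eq_map, Subgroup.range_subtype]
  have hKsucc : ∀ m, K (m + 1) = ⁅K m, K m⁆ := fun m => by
    simp only [hK, derivedSeries_succ, Subgroup.map_commutator]
  have hKnormal : ∀ m, (K m).Normal := by
    intro m
    induction m with
    | zero => rw [hK0]; exact hH
    | succ m ih => rw [hKsucc]; exact Subgroup.commutator_normal _ _ (h₁ := ih) (h₂ := ih)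
  have key : ∀ m, K m = ⊥ → H = ⊥ := by
    intro m
    induction m with
    | zero => rw [hK0]; exact id
    | succ m ih =>
      intro hbot
      apply ih
      apply P _ (hKnormal m)
      intro x hx y hy
      have : ⁅x, y⁆ ∈ K (m + 1) := by
        rw [hKsucc]
        exact Subgroup.commutator_mem_commutator hx hy
      rw [hbot, Subgroup.mem_bot] at this
      have := commutatorElement_eq_one_iff_commute.mp this
      exact this
  apply key n
  show Subgroup.map H.subtype (derivedSeries (↥H) n) = ⊥
  rw [hn, Subgroup.map_bot]



universe u v
variable (G₁ : Type u) (G₂ : Type v) [Group G₁] [Group G₂]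

/-- The Bool-indexed family for the binary free product. -/
def FF : Bool → Type (max u v) := fun b => cond b (ULift.{v} G₁) (ULift.{u} G₂)

instance : ∀ b, Group (FF G₁ G₂ b) := fun b => by
  cases b
  · exact inferInstanceAs (Group (ULift G₂))
  · exact inferInstanceAs (Group (ULift G₁))

instance [Nontrivial G₁] [Nontrivial G₂] : ∀ b, Nontrivial (FF G₁ G₂ b) := fun b => by
  cases b
  · exact inferInstanceAs (Nontrivial (ULift G₂))
  · exact inferInstanceAs (Nontrivial (ULift G₁))

theorem card_FF_true : Nat.card (FF G₁ G₂ true) = Nat.card G₁ :=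
  Nat.card_congr Equiv.ulift
theorem card_FF_false : Nat.card (FF G₁ G₂ false) = Nat.card G₂ :=
  Nat.card_congr Equiv.ulift

/-- The canonical equivalence between binary `Coprod` and Bool-indexed `CoprodI`. -/
noncomputable def coprodEquivCoprodI : Coprod G₁ G₂ ≃* CoprodI (FF G₁ G₂) := by
  refine MonoidHom.toMulEquiv
    (Coprod.lift
      ((CoprodI.of (M := FF G₁ G₂) (i := true)).comp
        (MulEquiv.ulift.symm : G₁ ≃* ULift.{v} G₁).toMonoidHom)
      ((CoprodI.of (M := FF G₁ G₂) (i := false)).comp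
        (MulEquiv.ulift.symm : G₂ ≃* ULift.{u} G₂).toMonoidHom))
    (CoprodI.lift (fun b => Bool.rec
      (motive := fun b => FF G₁ G₂ b →* Coprod G₁ G₂)
      (Coprod.inr.comp (MulEquiv.ulift : ULift.{u} G₂ ≃* G₂).toMonoidHom)
      (Coprod.inl.comp (MulEquiv.ulift : ULift.{v} G₁ ≃* G₁).toMonoidHom) b))
    ?_ ?_
  · apply Coprod.hom_ext <;> ext x <;>
      simp [Coprod.lift_apply_inl, Coprod.lift_apply_inr, CoprodI.lift_of,
        MulEquiv.apply_symm_apply, MulEquiv.symm_apply_apply] <;> rfl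
  · apply CoprodI.ext_hom
    intro b
    cases b <;> ext x <;>
      simp [Coprod.lift_apply_inl, Coprod.lift_apply_inr, CoprodI.lift_of,
        MulEquiv.apply_symm_apply, MulEquiv.symm_apply_apply] <;> rfl


end FPAux

open FPAux

/-- A nontrivial free product `G₁ ∗ G₂` (with `G₁`, `G₂` not both cyclic of
order `2`) is normally insoluble: every solvable normal subgroup is trivial. -/
theorem free_product_normally_insoluble {G₁ G₂ : Type*} [Group G₁] [Group G₂]
    [Nontrivial G₁] [Nontrivial G₂]
    (hnot22 : ¬(Nat.card G₁ = 2 ∧ Nat.card G₂ = 2))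
    (H : Subgroup (Monoid.Coprod G₁ G₂)) (hH : H.Normal) (hsolv : IsSolvable ↥H) :
    H = ⊥ := by
  classical
  have hbig' : Nat.card G₁ ≠ 2 ∨ Nat.card G₂ ≠ 2 := by tauto
  set E := coprodEquivCoprodI G₁ G₂ with hE
  set A : Subgroup (CoprodI (FF G₁ G₂)) := H.map E.toMonoidHom with hA
  have hAnormal : A.Normal := hH.map E.toMonoidHom E.surjective
  have hAsolv : IsSolvable ↥A := by
    have equiv := H.equivMapOfInjective E.toMonoidHom E.injective
    haveI : Group.IsSolvable ↥H := hsolv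
    exact solvable_of_solvable_injective (f := equiv.symm.toMonoidHom) equiv.symm.injective
  have hbig : ∃ b, Nat.card (FF G₁ G₂ b) ≠ 2 := by
    rcases hbig' with h | h
    · exact ⟨true, by rwa [card_FF_true]⟩
    · exact ⟨false, by rwa [card_FF_false]⟩
  have hAbot : A = ⊥ :=
    solvable_reduction (fun B hBn hBab => abelian_normal_eq_bot B hBn hBab hbig)
      A hAnormal hAsolv
  rw [Subgroup.eq_bot_iff_forall]
  intro x hx
  have hmem : E.toMonoidHom x ∈ A := Subgroup.mem_map_of_mem _ hx
  rw [hAbot, Subgroup.mem_bot] at hmem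
  exact E.injective (hmem.trans (map_one E).symm)
end

section
/- Every finitely generated nontrivial normal subgroup of a free group has finite index: if F is a free group and N is a normal subgroup of F that is finitely generated and not the trivial subgroup, then N has finite index in F. -/
namespace FgNormal

open List

variable {α : Type*} [DecidableEq α]

lemma reduce_cons_of_reduced {a : α × Bool} {A : List (α × Bool)}
    (h : FreeGroup.reduce (a :: A) = a :: A) : FreeGroup.reduce A = A := by
  have h1 : FreeGroup.Red (FreeGroup.reduce (a :: A)) (a :: FreeGroup.reduce A) := by
    rw [h]; exact FreeGroup.Red.cons_cons FreeGroup.reduce.red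
  have h2 := FreeGroup.reduce.min h1
  rw [h] at h2
  exact (List.cons_inj_right a).mp h2.symm

lemma reduce_append (A B : List (α × Bool)) (hA : FreeGroup.reduce A = A)
    (hB : FreeGroup.reduce B = B) :
    ∃ n, n ≤ A.length ∧ n ≤ B.length ∧
      FreeGroup.reduce (A ++ B) = A.take (A.length - n) ++ B.drop n ∧
      B.take n = FreeGroup.invRev (A.drop (A.length - n)) := by
  induction A with
  | nil => exact ⟨0, by simp [hB, FreeGroup.invRev]⟩
  | cons a A' ih =>
    have hA' : FreeGroup.reduce A' = A' := reduce_cons_of_reduced hA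
    obtain ⟨n, hn1, hn2, hred, htake⟩ := ih hA'
    have hstep : FreeGroup.reduce ((a :: A') ++ B) =
        List.casesOn (A'.take (A'.length - n) ++ B.drop n) [a]
          (fun hd tl => if a.1 = hd.1 ∧ a.2 = !hd.2 then tl else a :: hd :: tl) := by
      rw [List.cons_append, FreeGroup.reduce.cons, hred]
    by_cases hkpos : 0 < A'.length - n
    · -- no cancellation at this step
      obtain ⟨c, t, hct⟩ := List.exists_cons_of_ne_nil
        (show A'.take (A'.length - n) ≠ [] by
          intro h
          have := congrArg List.length h
          simp at this
          omega)
      have hcons : A' = c :: A'.tail := by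
        have hpre : A'.take (A'.length - n) <+: A' := List.take_prefix _ _
        rw [hct] at hpre
        obtain ⟨r, hr⟩ := hpre
        rw [← hr]; simp
      have hnc : ¬(a.1 = c.1 ∧ a.2 = !c.2) := by
        rintro ⟨h1, h2⟩
        refine FreeGroup.reduce.not (L₁ := a :: A') (L₂ := []) (x := a.1) (b := a.2)
          (L₃ := A'.tail) ?_
        rw [hA]
        simp only [List.nil_append]
        congr 1
        rw [hcons]
        congr 1
        refine Prod.ext h1.symm ?_
        rw [h2]; simp
      rw [hct] at hstep
      have hval : FreeGroup.reduce ((a :: A') ++ B) = a :: (c :: t ++ B.drop n) := by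
        rw [hstep]
        show (if a.1 = c.1 ∧ a.2 = !c.2 then t ++ B.drop n else a :: (c :: t ++ B.drop n)) = _
        rw [if_neg]
        intro h; exact hnc h
      have hlen : (a :: A').length - n = (A'.length - n) + 1 := by simp; omega
      refine ⟨n, by simp; omega, hn2, ?_, ?_⟩
      · rw [hval, hlen, List.take_succ_cons, hct]; simp
      · rw [hlen, List.drop_succ_cons, htake]
    · -- A' fully cancelled so far
      have htk0 : A'.take (A'.length - n) = [] := by
        rw [show A'.length - n = 0 by omega]; rfl
      rw [htk0, List.nil_append] at hstep
      have htake' : B.take n = FreeGroup.invRev A' := by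
        rw [htake, show A'.length - n = 0 by omega, List.drop_zero]
      cases hM : B.drop n with
      | nil =>
        rw [hM] at hstep
        have hnB : n = B.length := by
          have := congrArg List.length hM
          simp at this; omega
        refine ⟨n, by simp; omega, hn2, ?_, ?_⟩
        · rw [hstep, show (a :: A').length - n = 1 by simp; omega, hM]
          simp
        · rw [show (a :: A').length - n = 1 by simp; omega, List.drop_succ_cons,
            List.drop_zero, htake']
      | cons hd tl =>
        rw [hM] at hstep
        have hnB : n < B.length := by
          by_contra h
          rw [List.drop_eq_nil_of_le (by omega)] at hM
          cases hM
        have hkA : n = A'.length := by omega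
        by_cases hc : a.1 = hd.1 ∧ a.2 = !hd.2
        · have hval : FreeGroup.reduce ((a :: A') ++ B) = tl := by
            rw [hstep]
            show (if a.1 = hd.1 ∧ a.2 = !hd.2 then tl else a :: hd :: tl) = _
            rw [if_pos hc]
          refine ⟨n + 1, by simp; omega, by omega, ?_, ?_⟩
          · rw [hval, show (a :: A').length - (n + 1) = 0 by simp; omega, List.take_zero,
              List.nil_append, ← List.drop_drop, hM, List.drop_one, List.tail_cons]
          · rw [show (a :: A').length - (n + 1) = 0 by simp; omega, List.drop_zero]
            have h1 : B.take (n + 1) = B.take n ++ (B.drop n).take 1 := List.take_add ..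
            rw [h1, hM, htake']
            have h2 : FreeGroup.invRev (a :: A') = FreeGroup.invRev A' ++ [(a.1, !a.2)] := by
              simp [FreeGroup.invRev]
            rw [h2]
            congr 1
            simp only [List.take_succ_cons, List.take_zero]
            congr 1
            refine Prod.ext hc.1.symm ?_
            rw [hc.2]; simp
        · have hval : FreeGroup.reduce ((a :: A') ++ B) = a :: hd :: tl := by
            rw [hstep]
            show (if a.1 = hd.1 ∧ a.2 = !hd.2 then tl else a :: hd :: tl) = _
            rw [if_neg hc]
          refine ⟨n, by simp; omega, hn2, ?_, ?_⟩
          · rw [hval, show (a :: A').length - n = 1 by simp; omega]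
            rw [List.take_succ_cons, List.take_zero, hM]
            rfl
          · rw [show (a :: A').length - n = 1 by simp; omega, List.drop_succ_cons,
              List.drop_zero, htake']

lemma toWord_mul (x y : FreeGroup α) :
    (x * y).toWord = FreeGroup.reduce (x.toWord ++ y.toWord) := by
  conv_lhs => rw [← FreeGroup.mk_toWord (x := x), ← FreeGroup.mk_toWord (x := y),
    FreeGroup.mul_mk, FreeGroup.toWord_mk]

lemma suffix_append {s l₁ l₂ : List (α × Bool)} (h : s <:+ l₁ ++ l₂) :
    s <:+ l₂ ∨ ∃ t, t <:+ l₁ ∧ s = t ++ l₂ := by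
  obtain ⟨r, hr⟩ := h
  rcases List.append_eq_append_iff.mp hr with ⟨a', ha1, ha2⟩ | ⟨c', hc1, hc2⟩
  · exact Or.inr ⟨a', ⟨r, ha1.symm⟩, ha2⟩
  · exact Or.inl ⟨c', hc2.symm⟩

lemma head?_invRev (L : List (α × Bool)) :
    (FreeGroup.invRev L).head? = L.getLast?.map (fun p => (p.1, !p.2)) := by
  rw [FreeGroup.invRev, List.head?_reverse, List.getLast?_map]

lemma reduce_append_of_junction (A B : List (α × Bool)) (hA : FreeGroup.reduce A = A)
    (hB : FreeGroup.reduce B = B)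
    (h : ∀ x ∈ A.getLast?, ∀ y ∈ B.head?, y ≠ (x.1, !x.2)) :
    FreeGroup.reduce (A ++ B) = A ++ B := by
  obtain ⟨n, hn1, hn2, hred, htake⟩ := reduce_append A B hA hB
  rcases Nat.eq_zero_or_pos n with h0 | hpos
  · subst h0; simpa using hred
  · exfalso
    have hBne : B ≠ [] := by rintro rfl; simp at hn2; omega
    obtain ⟨hd, B', rfl⟩ := List.exists_cons_of_ne_nil hBne
    have h1 : (List.take n (hd :: B')).head? = some hd := by
      obtain ⟨m, rfl⟩ := Nat.exists_eq_add_of_lt hpos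
      simp [List.take_succ_cons]  -- take (0+m+1)? careful
    have h2 : (FreeGroup.invRev (A.drop (A.length - n))).head? =
        A.getLast?.map (fun p => (p.1, !p.2)) := by
      rw [head?_invRev, List.getLast?_drop, if_neg (by omega)]
    rw [htake, h2] at h1
    have hAne : A ≠ [] := by rintro rfl; simp at hn1; omega
    obtain ⟨la, hla⟩ : ∃ la, A.getLast? = some la :=
      Option.isSome_iff_exists.mp (List.getLast?_isSome.mpr hAne)
    rw [hla] at h1
    simp only [Option.map_some, Option.some.injEq] at h1
    exact h la (by rw [hla]; rfl) hd rfl h1.symm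

lemma suffix_mul {x y : FreeGroup α} {s : List (α × Bool)} (hs : s <:+ (x * y).toWord) :
    s <:+ y.toWord ∨ ∃ s₁, s₁ <:+ x.toWord ∧ FreeGroup.mk s = FreeGroup.mk s₁ * y := by
  obtain ⟨n, hn1, hn2, hred, htake⟩ := reduce_append x.toWord y.toWord
    (FreeGroup.reduce_toWord x) (FreeGroup.reduce_toWord y)
  rw [toWord_mul, hred] at hs
  rcases suffix_append hs with h | ⟨t, ht, rfl⟩
  · exact Or.inl (h.trans (List.drop_suffix _ _))
  · right
    set k := x.toWord.length - n with hk
    have hP : FreeGroup.mk (x.toWord.take k) * FreeGroup.mk (x.toWord.drop k) = x := by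
      rw [FreeGroup.mul_mk, List.take_append_drop, FreeGroup.mk_toWord]
    have hQ : FreeGroup.mk (y.toWord.take n) * FreeGroup.mk (y.toWord.drop n) = y := by
      rw [FreeGroup.mul_mk, List.take_append_drop, FreeGroup.mk_toWord]
    have htk : FreeGroup.mk (y.toWord.take n) = (FreeGroup.mk (x.toWord.drop k))⁻¹ := by
      rw [htake, ← FreeGroup.inv_mk]
    have hdropB : FreeGroup.mk (y.toWord.drop n) = FreeGroup.mk (x.toWord.drop k) * y := by
      have h' := eq_inv_mul_of_mul_eq hQ
      rw [htk, inv_inv] at h'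
      exact h'
    refine ⟨t ++ x.toWord.drop k, ?_, ?_⟩
    · obtain ⟨r, hr⟩ := ht
      exact ⟨r, by rw [← List.append_assoc, hr, List.take_append_drop]⟩
    · rw [← FreeGroup.mul_mk, ← FreeGroup.mul_mk, hdropB, mul_assoc]

variable {α : Type*} [DecidableEq α]

lemma invRev_drop_invRev (w : List (α × Bool)) (n : ℕ) (hn : n ≤ w.length) :
    FreeGroup.invRev ((FreeGroup.invRev w).drop (w.length - n)) = w.take n := by
  have h1 : (FreeGroup.invRev w).drop (w.length - n) = FreeGroup.invRev (w.take n) := by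
    rw [FreeGroup.invRev, List.drop_reverse, List.length_map,
      show w.length - (w.length - n) = n by omega, ← List.map_take, ← FreeGroup.invRev]
  rw [h1, FreeGroup.invRev_invRev]

/-- The finite collection of "coset representatives": `1` together with `mk` of suffixes
of generators and their inverses. -/
def InD (S : Finset (FreeGroup α)) (d : FreeGroup α) : Prop :=
  d = 1 ∨ ∃ t s', (t ∈ S ∨ t⁻¹ ∈ S) ∧ s' <:+ t.toWord ∧ d = FreeGroup.mk s'

lemma InD_finite (S : Finset (FreeGroup α)) : {d : FreeGroup α | InD S d}.Finite := by
  have hsub : {d : FreeGroup α | InD S d} ⊆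
      insert 1 (⋃ t ∈ ((S : Set (FreeGroup α)) ∪ (S : Set (FreeGroup α))⁻¹),
        (fun s' => FreeGroup.mk s') '' {s' | s' ∈ t.toWord.tails}) := by
    rintro d (rfl | ⟨t, s', ht, hs', rfl⟩)
    · exact Set.mem_insert _ _
    · refine Set.mem_insert_of_mem _ ?_
      refine Set.mem_biUnion (show t ∈ _ from ?_) ⟨s', (List.mem_tails _ _).mpr hs', rfl⟩
      rcases ht with h | h
      · exact Or.inl h
      · exact Or.inr (Set.mem_inv.mpr h)
  refine Set.Finite.subset ?_ hsub
  refine Set.Finite.insert _ (Set.Finite.biUnion (S.finite_toSet.union S.finite_toSet.inv)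
    fun t _ => (t.toWord.tails.finite_toSet).image _)

lemma list_suffix_coset (S : Finset (FreeGroup α)) :
    ∀ (l : List (FreeGroup α)), (∀ y ∈ l, y ∈ S ∨ y⁻¹ ∈ S) →
      ∀ s, s <:+ (l.prod).toWord →
      ∃ d, InD S d ∧ d⁻¹ * FreeGroup.mk s ∈ Subgroup.closure (S : Set (FreeGroup α)) := by
  intro l
  induction l with
  | nil =>
    intro _ s hs
    rw [List.prod_nil, FreeGroup.toWord_one] at hs
    rw [List.suffix_nil.mp hs]
    exact ⟨1, Or.inl rfl, by rw [← FreeGroup.one_eq_mk]; simpa using one_mem _⟩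
  | cons t l ih =>
    intro hl s hs
    rw [List.prod_cons] at hs
    rcases suffix_mul hs with h | ⟨s₁, hs₁, heq⟩
    · exact ih (fun y hy => hl y (List.mem_cons_of_mem _ hy)) s h
    · refine ⟨FreeGroup.mk s₁, Or.inr ⟨t, s₁, hl t (List.mem_cons_self), hs₁, rfl⟩, ?_⟩
      rw [heq, inv_mul_cancel_left]
      refine list_prod_mem fun y hy => ?_
      rcases hl y (List.mem_cons_of_mem _ hy) with h | h
      · exact Subgroup.subset_closure h
      · simpa using inv_mem (Subgroup.subset_closure h)

lemma exists_d (S : Finset (FreeGroup α)) (x : FreeGroup α)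
    (hx : x ∈ Subgroup.closure (S : Set (FreeGroup α))) :
    ∀ s, s <:+ x.toWord →
      ∃ d, InD S d ∧ d⁻¹ * FreeGroup.mk s ∈ Subgroup.closure (S : Set (FreeGroup α)) := by
  have hx' : x ∈ (Subgroup.closure (S : Set (FreeGroup α))).toSubmonoid := hx
  rw [Subgroup.closure_toSubmonoid] at hx'
  obtain ⟨l, hl, hprod⟩ := Submonoid.exists_list_of_mem_closure hx'
  have hl' : ∀ y ∈ l, y ∈ S ∨ y⁻¹ ∈ S := by
    intro y hy
    rcases hl y hy with h | h
    · exact Or.inl h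
    · exact Or.inr (Set.mem_inv.mp h)
  intro s hs
  exact list_suffix_coset S l hl' s (by rw [hprod]; exact hs)

lemma exists_cyc (N : Subgroup (FreeGroup α)) (hnormal : N.Normal) (hne : N ≠ ⊥) :
    ∃ u ∈ N, u ≠ 1 ∧ ∀ a b L, u.toWord ≠ (a, b) :: (L ++ [(a, !b)]) := by
  obtain ⟨v, hvN, hv1⟩ : ∃ v ∈ N, v ≠ 1 := by
    by_contra h
    push_neg at h
    exact hne ((Subgroup.eq_bot_iff_forall N).mpr h)
  set Sn := {n | ∃ w ∈ N, w ≠ 1 ∧ w.toWord.length = n} with hSndef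
  have hSn : Sn.Nonempty := ⟨_, v, hvN, hv1, rfl⟩
  obtain ⟨u, huN, hu1, hulen⟩ := Nat.sInf_mem hSn
  refine ⟨u, huN, hu1, ?_⟩
  intro a b L hw
  have hinvs : (FreeGroup.mk [(a, b)])⁻¹ = FreeGroup.mk [(a, !b)] := by
    rw [FreeGroup.inv_mk, show FreeGroup.invRev [(a, b)] = [(a, !b)] by
      simp [FreeGroup.invRev]]
  have hx : u = FreeGroup.mk [(a, b)] * FreeGroup.mk L * (FreeGroup.mk [(a, b)])⁻¹ := by
    rw [hinvs, FreeGroup.mul_mk, FreeGroup.mul_mk, ← FreeGroup.mk_toWord (x := u), hw]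
    simp
  have hconj : (FreeGroup.mk [(a, b)])⁻¹ * u * FreeGroup.mk [(a, b)] ∈ N := by
    have := hnormal.conj_mem u huN (FreeGroup.mk [(a, b)])⁻¹
    simpa [inv_inv] using this
  have hval : (FreeGroup.mk [(a, b)])⁻¹ * u * FreeGroup.mk [(a, b)] = FreeGroup.mk L := by
    rw [hx]; group
  rw [hval] at hconj
  have hne1 : FreeGroup.mk L ≠ 1 := by
    intro h
    apply hu1
    rw [hx, h]
    group
  have hlenlt : (FreeGroup.mk L).toWord.length < u.toWord.length := by
    have h1 : (FreeGroup.mk L).toWord.length ≤ L.length := FreeGroup.norm_mk_le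
    have h2 : u.toWord.length = L.length + 2 := by rw [hw]; simp
    omega
  have hmem : (FreeGroup.mk L).toWord.length ∈ Sn := ⟨_, hconj, hne1, rfl⟩
  have := Nat.sInf_le hmem
  omega

lemma main_ind (S : Finset (FreeGroup α)) (N : Subgroup (FreeGroup α))
    (hN : Subgroup.closure (S : Set (FreeGroup α)) = N) (hnormal : N.Normal)
    (u : FreeGroup α) (huN : u ∈ N) (hu1 : u ≠ 1)
    (hcyc : ∀ a b L, u.toWord ≠ (a, b) :: (L ++ [(a, !b)])) :
    ∀ (n : ℕ) (g : FreeGroup α), g.toWord.length < n → ∃ d, InD S d ∧ d⁻¹ * g ∈ N := by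
  intro n
  induction n with
  | zero => intro g h; omega
  | succ n ih =>
    intro g hg
    rcases eq_or_ne g 1 with rfl | hg1
    · exact ⟨1, Or.inl rfl, by simpa using one_mem N⟩
    have hgw : g.toWord ≠ [] := fun h => hg1 (FreeGroup.toWord_eq_nil_iff.mp h)
    obtain ⟨hd, gt, hgcons⟩ := List.exists_cons_of_ne_nil hgw
    have huw : u.toWord ≠ [] := fun h => hu1 (FreeGroup.toWord_eq_nil_iff.mp h)
    obtain ⟨la, hla⟩ : ∃ la, u.toWord.getLast? = some la :=
      Option.isSome_iff_exists.mp (List.getLast?_isSome.mpr huw)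
    obtain ⟨h0, hh0⟩ : ∃ h0, u.toWord.head? = some h0 :=
      Option.isSome_iff_exists.mp (List.isSome_head?.mpr huw)
    -- choose a conjugating element v ∈ {u, u⁻¹} with no cancellation against g on the right
    have hv : ∃ v, v ∈ N ∧ v ≠ 1 ∧
        (∀ x ∈ v.toWord.getLast?, ∀ y ∈ g.toWord.head?, y ≠ (x.1, !x.2)) := by
      by_cases hcase : hd = (la.1, !la.2)
      · refine ⟨u⁻¹, inv_mem huN, inv_ne_one.mpr hu1, ?_⟩
        intro x hx y hy
        have hlast : (u⁻¹).toWord.getLast? = u.toWord.head?.map (fun p => (p.1, !p.2)) := by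
          rw [FreeGroup.toWord_inv, FreeGroup.invRev, List.getLast?_reverse, List.head?_map]
        rw [hlast, hh0] at hx
        simp only [Option.map_some, Option.mem_def, Option.some.injEq] at hx
        subst hx
        rw [hgcons] at hy
        simp only [List.head?_cons, Option.mem_def, Option.some.injEq] at hy
        subst hy
        intro hEq
        simp only [Bool.not_not] at hEq
        -- now hd = h0, and hd = (la.1, !la.2), derive cyclic reduction contradiction
        have hhd0 : hd = h0 := by rw [hEq]
        have hla' : la = (h0.1, !h0.2) := by
          have h1 : h0.1 = la.1 := by rw [← hhd0, hcase]
          have h2 : h0.2 = !la.2 := by rw [← hhd0, hcase]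
          have : la.2 = !h0.2 := by rw [h2, Bool.not_not]
          exact Prod.ext h1.symm this
        obtain ⟨tail, htail⟩ : ∃ tail, u.toWord = h0 :: tail := by
          cases hcons : u.toWord with
          | nil => exact absurd hcons huw
          | cons c cs =>
            rw [hcons] at hh0
            simp only [List.head?_cons, Option.some.injEq] at hh0
            exact ⟨cs, by rw [hh0]⟩
        rcases eq_or_ne tail [] with rfl | htne
        · rw [htail] at hla
          simp only [List.getLast?_singleton, Option.some.injEq] at hla
          rw [hla'] at hla
          have := congrArg Prod.snd hla
          simp at this
        · have hgl := List.getLast?_eq_getLast (l := tail) htne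
          have hlast2 : tail.getLast htne = la := by
            rw [htail, show h0 :: tail = [h0] ++ tail from rfl, List.getLast?_append, hgl] at hla
            simpa using hla
          have hte : tail = tail.dropLast ++ [(h0.1, !h0.2)] := by
            conv_lhs => rw [← List.dropLast_append_getLast htne]
            rw [hlast2, hla']
          apply hcyc h0.1 h0.2 tail.dropLast
          rw [htail]
          conv_lhs => rw [hte]
      · refine ⟨u, huN, hu1, ?_⟩
        intro x hx y hy
        rw [hla] at hx
        rw [hgcons] at hy
        simp only [Option.mem_def, Option.some.injEq, List.head?_cons] at hx hy
        subst hx; subst hy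
        exact fun h => hcase h
    obtain ⟨v, hvN, hv1, hjun⟩ := hv
    have hjoin : FreeGroup.reduce (v.toWord ++ g.toWord) = v.toWord ++ g.toWord :=
      reduce_append_of_junction _ _ (FreeGroup.reduce_toWord v) (FreeGroup.reduce_toWord g) hjun
    have hvg : (v * g).toWord = v.toWord ++ g.toWord := by
      rw [toWord_mul, hjoin]
    have hmN : g⁻¹ * (v * g) ∈ N := by
      have := hnormal.conj_mem v hvN g⁻¹
      simpa [mul_assoc] using this
    have hmw : (g⁻¹ * (v * g)).toWord =
        FreeGroup.reduce (g⁻¹.toWord ++ (v.toWord ++ g.toWord)) := by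
      rw [toWord_mul, hvg]
    obtain ⟨n', h1, h2, hred, htake⟩ := reduce_append (g⁻¹.toWord) (v.toWord ++ g.toWord)
      (FreeGroup.reduce_toWord _) hjoin
    have hAlen : g⁻¹.toWord.length = g.toWord.length := by
      rw [FreeGroup.toWord_inv, FreeGroup.invRev_length]
    by_cases hcmp : n' ≤ v.toWord.length
    · -- g.toWord is a suffix of the reduced word of g⁻¹vg ∈ N
      have hsuf : g.toWord <:+ (g⁻¹ * (v * g)).toWord := by
        rw [hmw, hred, List.drop_append_of_le_length hcmp]
        exact (List.suffix_append _ _).trans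
          ((List.suffix_append _ _))
      obtain ⟨d, hdD, hdN⟩ := exists_d S (g⁻¹ * (v * g)) (by rw [hN]; exact hmN) g.toWord hsuf
      rw [FreeGroup.mk_toWord] at hdN
      exact ⟨d, hdD, by rw [← hN]; exact hdN⟩
    · -- v.toWord is a prefix of g.toWord; strip it and recurse
      push_neg at hcmp
      have hn'g : n' ≤ g.toWord.length := by omega
      have hBtake : (v.toWord ++ g.toWord).take n' = g.toWord.take n' := by
        rw [htake, hAlen, FreeGroup.toWord_inv]
        exact invRev_drop_invRev g.toWord n' hn'g
      have hvlen : v.toWord.length ≤ n' := le_of_lt hcmp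
      have hveq : v.toWord = g.toWord.take v.toWord.length := by
        have hx := congrArg (List.take v.toWord.length) hBtake
        rw [List.take_take, min_eq_left hvlen, List.take_take, min_eq_left hvlen,
          List.take_append_of_le_length le_rfl, List.take_length] at hx
        exact hx
      have hgvh : v * FreeGroup.mk (g.toWord.drop v.toWord.length) = g := by
        have hsplit : FreeGroup.mk (g.toWord.take v.toWord.length) *
            FreeGroup.mk (g.toWord.drop v.toWord.length) = g := by
          rw [FreeGroup.mul_mk, List.take_append_drop, FreeGroup.mk_toWord]
        rw [← hveq, FreeGroup.mk_toWord] at hsplit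
        exact hsplit
      have hvpos : 0 < v.toWord.length := by
        rcases Nat.eq_zero_or_pos v.toWord.length with h | h
        · exact absurd (FreeGroup.toWord_eq_nil_iff.mp (List.length_eq_zero_iff.mp h)) hv1
        · exact h
      have hlenh : (FreeGroup.mk (g.toWord.drop v.toWord.length)).toWord.length <
          g.toWord.length := by
        have hle : (FreeGroup.mk (g.toWord.drop v.toWord.length)).toWord.length ≤
            (g.toWord.drop v.toWord.length).length := FreeGroup.norm_mk_le
        rw [List.length_drop] at hle
        have : 0 < g.toWord.length := by
          rw [hgcons]; simp
        omega
      obtain ⟨d, hdD, hdN⟩ := ih (FreeGroup.mk (g.toWord.drop v.toWord.length)) (by omega)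
      refine ⟨d, hdD, ?_⟩
      rw [← hgvh]
      have hre : d⁻¹ * (v * FreeGroup.mk (g.toWord.drop v.toWord.length)) =
          (d⁻¹ * v * d) * (d⁻¹ * FreeGroup.mk (g.toWord.drop v.toWord.length)) := by
        group
      rw [hre]
      exact mul_mem (by simpa using hnormal.conj_mem v hvN d⁻¹) hdN

end FgNormal

/-- Every finitely generated nontrivial normal subgroup of a free group has
finite index. -/
theorem freeGroup_fg_normal_finiteIndex {α : Type*} (N : Subgroup (FreeGroup α))
    (hnormal : N.Normal) (hfg : N.FG) (hne : N ≠ ⊥) :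
    N.FiniteIndex := by
  classical
  obtain ⟨S, hS⟩ := hfg
  obtain ⟨u, huN, hu1, hcyc⟩ := FgNormal.exists_cyc N hnormal hne
  have main := FgNormal.main_ind S N hS hnormal u huN hu1 hcyc
  have hfin : Finite (FreeGroup α ⧸ N) := by
    have hDfin : Finite {d : FreeGroup α // FgNormal.InD S d} :=
      (FgNormal.InD_finite S).to_subtype
    refine Finite.of_surjective
      (fun d : {d : FreeGroup α // FgNormal.InD S d} => (QuotientGroup.mk d.1 : FreeGroup α ⧸ N))
      ?_
    intro q
    obtain ⟨g, rfl⟩ := QuotientGroup.mk_surjective q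
    obtain ⟨d, hdD, hdN⟩ := main (g.toWord.length + 1) g (by omega)
    exact ⟨⟨d, hdD⟩, QuotientGroup.eq.mpr hdN⟩
  exact Subgroup.finiteIndex_of_finite_quotient (H := N)
end

section
/- Let G be a subgroup of SL(2, ℝ) containing a hyperbolic element, i.e., a matrix γ ∈ G with |trace γ| > 2. Then for every x ∈ G with x ≠ I and x ≠ −I, the normal closure of x in G (the smallest normal subgroup of G containing x) contains an element of infinite order, hence contains an infinite cyclic subgroup. -/
open Matrix

private lemma ch2 (A : Matrix (Fin 2) (Fin 2) ℝ) :
    A * A = (trace A) • A - (det A) • 1 := by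
  ext i j
  fin_cases i <;> fin_cases j <;>
    simp [Matrix.mul_apply, Fin.sum_univ_two, Matrix.trace_fin_two, Matrix.det_fin_two,
      Matrix.one_apply] <;> ring

private lemma hyp_pow_ne_one (A : Matrix (Fin 2) (Fin 2) ℝ) (hd : det A = 1)
    (ht : 2 < |trace A|) : ∀ n, 0 < n → A ^ n ≠ 1 := by
  have hrec : ∀ n : ℕ, A ^ (n + 2) = (trace A) • A ^ (n + 1) - A ^ n := by
    intro n
    have h0 : A ^ (n + 2) = A ^ n * (A * A) := by
      rw [pow_succ, pow_succ, mul_assoc]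
    rw [h0, ch2 A, hd, one_smul, mul_sub, mul_smul_comm, mul_one, ← pow_succ]
  have key : ∀ n : ℕ, 2 ≤ |trace (A ^ n)| ∧ |trace (A ^ n)| < |trace (A ^ (n + 1))| := by
    intro n
    induction n with
    | zero =>
      constructor
      · simp [Matrix.trace_one]
      · simpa [Matrix.trace_one] using ht
    | succ n ih =>
      obtain ⟨h1, h2⟩ := ih
      refine ⟨le_of_lt (lt_of_le_of_lt h1 h2), ?_⟩
      rw [hrec n, trace_sub, trace_smul]
      have habs : |trace A * trace (A ^ (n + 1))| - |trace (A ^ n)| ≤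
          |trace A * trace (A ^ (n + 1)) - trace (A ^ n)| := abs_sub_abs_le_abs_sub _ _
      rw [abs_mul] at habs
      simp only [smul_eq_mul]
      nlinarith [abs_nonneg (trace (A ^ n)), abs_nonneg (trace (A ^ (n + 1)))]
  have key2 : ∀ n : ℕ, 0 < n → 2 < |trace (A ^ n)| := by
    intro n hn
    induction n with
    | zero => omega
    | succ n ih =>
      rcases Nat.eq_zero_or_pos n with h | h
      · subst h; simpa using (key 0).2
      · exact lt_trans (ih h) (key n).2
  intro n hn hcon
  have := key2 n hn
  rw [hcon] at this
  simp [Matrix.trace_one] at this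

private lemma para_pow_ne_one (A : Matrix (Fin 2) (Fin 2) ℝ) (hd : det A = 1)
    (ht : trace A = 2) (hA : A ≠ 1) : ∀ n, 0 < n → A ^ n ≠ 1 := by
  set N := A - 1 with hN
  have hsq : A * A = (2 : ℝ) • A - 1 := by
    rw [ch2 A, hd, ht, one_smul]
  have hNsq : N * N = 0 := by
    rw [hN]
    have : (A - 1) * (A - 1) = A * A - A - A + 1 := by noncomm_ring
    rw [this, hsq]
    have : ((2 : ℝ) • A : Matrix (Fin 2) (Fin 2) ℝ) = A + A := two_smul ℝ A
    rw [this]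
    abel
  have hpow : ∀ n : ℕ, A ^ n = 1 + (n : ℝ) • N := by
    intro n
    induction n with
    | zero => simp
    | succ n ih =>
      have hA' : A = 1 + N := by rw [hN]; abel
      rw [pow_succ, ih, hA']
      rw [mul_add, add_mul, add_mul, one_mul, mul_one, smul_mul_assoc, hNsq, smul_zero]
      rw [Nat.cast_add, Nat.cast_one, add_smul, one_smul, one_mul, hN]
      abel
  intro n hn hcon
  rw [hpow n] at hcon
  have : (n : ℝ) • N = 0 := by
    calc (n : ℝ) • N = (1 + (n : ℝ) • N) - 1 := by abel
    _ = 0 := by rw [hcon]; abel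
  rcases smul_eq_zero.mp this with h | h
  · exact (Nat.cast_ne_zero.mpr hn.ne') h
  · exact hA (sub_eq_zero.mp (hN ▸ h))

private lemma para_neg_pow_ne_one (A : Matrix (Fin 2) (Fin 2) ℝ) (hd : det A = 1)
    (ht : trace A = -2) (hA : A ≠ -1) : ∀ n, 0 < n → A ^ n ≠ 1 := by
  have hsq : A * A = (-2 : ℝ) • A - 1 := by
    rw [ch2 A, hd, ht, one_smul]
  have hdB : det (A * A) = 1 := by rw [det_mul, hd, mul_one]
  have htB : trace (A * A) = 2 := by
    rw [hsq, trace_sub, trace_smul, ht]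
    simp [Matrix.trace_one]
    norm_num
  have hBne : A * A ≠ 1 := by
    intro h
    rw [hsq] at h
    apply hA
    have h1 : (-2 : ℝ) • A = 1 + 1 := by
      calc (-2 : ℝ) • A = ((-2 : ℝ) • A - 1) + 1 := by abel
      _ = 1 + 1 := by rw [h]
    have h2 : A = (-2 : ℝ)⁻¹ • ((1 : Matrix (Fin 2) (Fin 2) ℝ) + 1) := by
      rw [← h1, smul_smul]
      norm_num
    rw [h2]
    ext i j
    simp [Matrix.one_apply]
    split <;> norm_num
  intro n hn hcon
  apply para_pow_ne_one (A * A) hdB htB hBne n hn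
  calc (A * A) ^ n = A ^ (2 * n) := by rw [← pow_two, ← pow_mul]
  _ = (A ^ n) ^ 2 := by rw [← pow_mul, mul_comm]
  _ = 1 := by rw [hcon]; simp

private lemma fricke (A B : Matrix (Fin 2) (Fin 2) ℝ) (hdA : det A = 1) (hdB : det B = 1) :
    trace (A * B * adjugate A * adjugate B) =
      (trace A) ^ 2 + (trace B) ^ 2 + (trace (A * B)) ^ 2
        - trace A * trace B * trace (A * B) - 2 := by
  rw [Matrix.det_fin_two] at hdA hdB
  rw [Matrix.adjugate_fin_two, Matrix.adjugate_fin_two]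
  simp [Matrix.trace_fin_two, Matrix.mul_apply, Fin.sum_univ_two]
  linear_combination (-2 + (B 1 1) ^ 2 + 2 * (B 0 0) * (B 1 1) + (B 0 0) ^ 2) * hdA +
    ((A 1 1) ^ 2 + 2 * (A 0 1) * (A 1 0) + (A 0 0) ^ 2) * hdB

/-- Let `G` be a subgroup of `SL(2, ℝ)` containing a hyperbolic element `γ`
(i.e. `|trace γ| > 2`). Then for every `x ∈ G` with `x ≠ I` and `x ≠ -I`, the normal
closure of `x` in `G` contains an element of infinite order (hence an infinite cyclic
subgroup). -/
theorem normalClosure_contains_infinite_order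
    (G : Subgroup (Matrix.SpecialLinearGroup (Fin 2) ℝ))
    (γ : ↥G)
    (hγ : 2 < |Matrix.trace ((γ : Matrix.SpecialLinearGroup (Fin 2) ℝ) :
      Matrix (Fin 2) (Fin 2) ℝ)|)
    (x : ↥G)
    (hx1 : ((x : Matrix.SpecialLinearGroup (Fin 2) ℝ) : Matrix (Fin 2) (Fin 2) ℝ) ≠ 1)
    (hxneg1 : ((x : Matrix.SpecialLinearGroup (Fin 2) ℝ) : Matrix (Fin 2) (Fin 2) ℝ) ≠ -1) :
    ∃ y ∈ Subgroup.normalClosure ({x} : Set ↥G), ¬ IsOfFinOrder y := by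
  set Mγ : Matrix (Fin 2) (Fin 2) ℝ :=
    ((γ : Matrix.SpecialLinearGroup (Fin 2) ℝ) : Matrix (Fin 2) (Fin 2) ℝ) with hMγ
  set Mx : Matrix (Fin 2) (Fin 2) ℝ :=
    ((x : Matrix.SpecialLinearGroup (Fin 2) ℝ) : Matrix (Fin 2) (Fin 2) ℝ) with hMx
  have hdγ : det Mγ = 1 := (γ : Matrix.SpecialLinearGroup (Fin 2) ℝ).2
  have hdx : det Mx = 1 := (x : Matrix.SpecialLinearGroup (Fin 2) ℝ).2
  -- bridge: matrix-level pow ≠ 1 implies not of finite order in ↥G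
  have bridge : ∀ y : ↥G,
      (∀ n, 0 < n →
        (((y : Matrix.SpecialLinearGroup (Fin 2) ℝ) : Matrix (Fin 2) (Fin 2) ℝ)) ^ n ≠ 1) →
      ¬ IsOfFinOrder y := by
    intro y hy hfin
    obtain ⟨n, hn, hpow⟩ := isOfFinOrder_iff_pow_eq_one.mp hfin
    apply hy n hn
    have h1 : ((y ^ n : ↥G) : Matrix.SpecialLinearGroup (Fin 2) ℝ) = 1 := by
      rw [hpow]; rfl
    rw [SubgroupClass.coe_pow] at h1
    calc ((y : Matrix.SpecialLinearGroup (Fin 2) ℝ) : Matrix (Fin 2) (Fin 2) ℝ) ^ n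
        = (((y : Matrix.SpecialLinearGroup (Fin 2) ℝ) ^ n :
            Matrix.SpecialLinearGroup (Fin 2) ℝ) : Matrix (Fin 2) (Fin 2) ℝ) :=
          (Matrix.SpecialLinearGroup.coe_pow _ n).symm
    _ = 1 := by rw [h1]; rfl
  have hx_mem : x ∈ Subgroup.normalClosure ({x} : Set ↥G) :=
    Subgroup.subset_normalClosure rfl
  set s : ℝ := trace Mx with hs_def
  set t : ℝ := trace Mγ with ht_def
  rcases lt_trichotomy |s| 2 with hs | hs | hs
  · -- |trace x| < 2 : use the commutator γ x γ⁻¹ x⁻¹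
    refine ⟨γ * x * γ⁻¹ * x⁻¹, ?_, ?_⟩
    · exact mul_mem (Subgroup.normalClosure_normal.conj_mem x hx_mem γ) (inv_mem hx_mem)
    · apply bridge
      have hy_mat : (((γ * x * γ⁻¹ * x⁻¹ : ↥G) : Matrix.SpecialLinearGroup (Fin 2) ℝ) :
          Matrix (Fin 2) (Fin 2) ℝ) = Mγ * Mx * adjugate Mγ * adjugate Mx := by
        have h0 : ((γ * x * γ⁻¹ * x⁻¹ : ↥G) : Matrix.SpecialLinearGroup (Fin 2) ℝ)
            = (γ : Matrix.SpecialLinearGroup (Fin 2) ℝ) * x *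
              (γ : Matrix.SpecialLinearGroup (Fin 2) ℝ)⁻¹ *
              (x : Matrix.SpecialLinearGroup (Fin 2) ℝ)⁻¹ := rfl
        rw [h0]
        rw [Matrix.SpecialLinearGroup.coe_mul, Matrix.SpecialLinearGroup.coe_mul,
          Matrix.SpecialLinearGroup.coe_mul, Matrix.SpecialLinearGroup.coe_inv,
          Matrix.SpecialLinearGroup.coe_inv]
      rw [hy_mat]
      apply hyp_pow_ne_one
      · rw [det_mul, det_mul, det_mul, hdγ, hdx, Matrix.det_adjugate,
          Matrix.det_adjugate, hdγ, hdx]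
        norm_num
      · rw [fricke Mγ Mx hdγ hdx]
        set u : ℝ := trace (Mγ * Mx)
        have ht2 : 4 < t ^ 2 := by
          nlinarith [sq_abs t, abs_nonneg t]
        have hs2 : s ^ 2 < 4 := by
          nlinarith [sq_abs s, abs_nonneg s]
        have hQ : 2 < t ^ 2 + s ^ 2 + u ^ 2 - t * s * u - 2 := by
          nlinarith [sq_nonneg (2 * u - t * s), mul_pos (by linarith : (0:ℝ) < t ^ 2 - 4)
            (by linarith : (0:ℝ) < 4 - s ^ 2)]
        calc (2:ℝ) < t ^ 2 + s ^ 2 + u ^ 2 - t * s * u - 2 := hQ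
        _ ≤ |t ^ 2 + s ^ 2 + u ^ 2 - t * s * u - 2| := le_abs_self _
  · -- |trace x| = 2 : x itself has infinite order
    refine ⟨x, hx_mem, bridge x ?_⟩
    rcases abs_eq (by norm_num : (0:ℝ) ≤ 2) |>.mp hs with h | h
    · exact para_pow_ne_one Mx hdx h hx1
    · exact para_neg_pow_ne_one Mx hdx h hxneg1
  · -- 2 < |trace x| : x itself has infinite order
    exact ⟨x, hx_mem, bridge x (hyp_pow_ne_one Mx hdx hs)⟩
end
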